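/- arXiv:1601.03477 — 2 statements merged into one kernel-verified Lean document; each statement's English description precedes it below -/
import Mathlib

section
/- Let P be a large-tree forcing notion, n < ω, T an n-collage over P, and D ⊆ P an open dense subset of P. Then there is an n-collage Q over P such that Q ⊆_n T and Q→s ∈ D for every s ∈ 2^n. -/
namespace E0L

/-- Finite binary strings `2^{<ω}`. -/
abbrev Str : Type := List Bool

/-- Sets of binary strings (in particular, trees). -/
abbrev Tr : Type := Set Str

/-- The action `s·t` of a string on a string:
`(s·t)(k) = t(k) + s(k) mod 2` for `k < min(|s|,|t|)` and `(s·t)(k) = t(k)` otherwise. -/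
def act (s t : Str) : Str := List.ofFn fun k : Fin t.length => Bool.xor (s.getD k false) (t.get k)

/-- The action `s·T` of a string on a set of strings. -/
def actT (s : Str) (T : Tr) : Tr := (act s) '' T

/-- `T ↾ s = {t ∈ T : s ⊆ t or t ⊆ s}`. -/
def restr (T : Tr) (s : Str) : Tr := {t ∈ T | s <+: t ∨ t <+: s}

/-- `[T]`, the set of infinite branches of `T` (as elements of Cantor space `2^ω`). -/
def branches (T : Tr) : Set (ℕ → Bool) := {x | ∀ n : ℕ, (List.ofFn fun k : Fin n => x k) ∈ T}

/-- `T[s] = {t : s ⊆ t or t ⊂ s}`. -/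
def Tbr (s : Str) : Tr := {t | s <+: t ∨ (t <+: s ∧ t ≠ s)}

/-- `LTwit T r q` : the strings `q i n` witness that `T` is an E0-large tree with stem `r`:
`|q^0_n| = |q^1_n| ≥ 1`, `q^i_n(0) = i`, and `T` consists of all initial segments of strings
of the form `r⌢q^{i(0)}_0⌢…⌢q^{i(n)}_n`. -/
def LTwit (T : Tr) (r : Str) (q : ℕ → Bool → Str) : Prop :=
  (∀ n : ℕ, (q n true).length = (q n false).length ∧ 1 ≤ (q n false).length) ∧
  (∀ n : ℕ, ∀ i : Bool, (q n i).head? = some i) ∧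
  T = {t | ∃ n : ℕ, ∃ f : ℕ → Bool,
        t <+: r ++ ((List.range (n+1)).map (fun k => q k (f k))).flatten}

/-- `T` is an E0-large tree (`T ∈ LT`). -/
def IsLT (T : Tr) : Prop := ∃ r q, LTwit T r q

/-- `stem T` : the longest `s ∈ T` with `T = T↾s`. -/
noncomputable def stem (T : Tr) : Str :=
  Classical.epsilon fun s => s ∈ T ∧ restr T s = T ∧ ∀ t ∈ T, restr T t = T → t.length ≤ s.length

/-- The canonical witness `(r, q)` of an E0-large tree. -/
noncomputable def witness (T : Tr) : Str × (ℕ → Bool → Str) :=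
  Classical.epsilon fun rq => LTwit T rq.1 rq.2

/-- Splitting levels computed from a witness: `spl_0 = |r|`, `spl_{n+1} = spl_n + |q^i_n|`. -/
def splN (r : Str) (q : ℕ → Bool → Str) : ℕ → ℕ
  | 0 => r.length
  | n+1 => splN r q n + (q n false).length

/-- `spl T n`, the `n`-th splitting level of an E0-large tree `T`. -/
noncomputable def spl (T : Tr) (n : ℕ) : ℕ := splN (witness T).1 (witness T).2 n

/-- Simple splitting `T→i = T↾(stem(T)⌢i)`. -/
noncomputable def split1 (T : Tr) (i : Bool) : Tr := restr T (stem T ++ [i])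

/-- Iterated splitting `T→s`: `T→Λ = T`, `T→(s⌢i) = (T→s)→i`. -/
noncomputable def splitS (T : Tr) (s : Str) : Tr := s.foldl split1 T

/-- `S ⊆_n T` : `S ⊆ T` and `spl_k(S) = spl_k(T)` for all `k < n`. -/
def subN (n : ℕ) (S T : Tr) : Prop := S ⊆ T ∧ ∀ k < n, spl S k = spl T k

/-- A large-tree forcing notion: a set of E0-large trees closed under restriction
and under the action of strings. -/
def IsLTF (P : Set Tr) : Prop :=
  (∀ T ∈ P, IsLT T) ∧
  (∀ T ∈ P, ∀ u ∈ T, restr T u ∈ P) ∧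
  (∀ T ∈ P, ∀ s : Str, actT s T ∈ P)

/-- `T` is an `n`-collage over `P`: `T ∈ LT` and `T→s ∈ P` for all `s ∈ 2^n`. -/
def IsCollage (P : Set Tr) (n : ℕ) (T : Tr) : Prop :=
  IsLT T ∧ ∀ s : Str, s.length = n → splitS T s ∈ P

/-- `D` is open dense in `P` (as a set of trees). -/
def OpenDense1 (P D : Set Tr) : Prop :=
  D ⊆ P ∧ (∀ S ∈ P, ∃ T ∈ D, T ⊆ S) ∧ (∀ S ∈ P, ∀ T ∈ D, S ⊆ T → S ∈ D)

/-- `⟨T,T'⟩` is a condition of the conditional product `P ×_{E0} P`. -/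
def CondPair (P : Set Tr) (p : Tr × Tr) : Prop :=
  p.1 ∈ P ∧ p.2 ∈ P ∧ ∃ s : Str, actT s p.1 = p.2

/-- Componentwise order on pairs of trees: `p ≤ q`. -/
def pleq (p q : Tr × Tr) : Prop := p.1 ⊆ q.1 ∧ p.2 ⊆ q.2

/-- Compatibility of two conditions in `P ×_{E0} P`. -/
def Compat (P : Set Tr) (p q : Tr × Tr) : Prop :=
  ∃ r : Tr × Tr, CondPair P r ∧ pleq r p ∧ pleq r q

/-- `D` is pre-dense in `P ×_{E0} P`. -/
def PreDense2 (P : Set Tr) (D : Set (Tr × Tr)) : Prop :=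
  ∀ p : Tr × Tr, CondPair P p → ∃ q ∈ D, Compat P p q

/-- `D` is open dense in `P ×_{E0} P`. -/
def OpenDense2 (P : Set Tr) (D : Set (Tr × Tr)) : Prop :=
  D ⊆ {p | CondPair P p} ∧
  (∀ p : Tr × Tr, CondPair P p → ∃ q ∈ D, pleq q p) ∧
  (∀ p : Tr × Tr, CondPair P p → ∀ q ∈ D, pleq p q → p ∈ D)

/-- A `P ×_{E0} P`-real name `c = ⟨C_n^i⟩`. -/
def IsRealName (P : Set Tr) (c : ℕ → Bool → Set (Tr × Tr)) : Prop :=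
  (∀ n : ℕ, ∀ i : Bool, c n i ⊆ {p | CondPair P p}) ∧
  (∀ n : ℕ, PreDense2 P (c n false ∪ c n true)) ∧
  (∀ n : ℕ, ∀ p ∈ c n false, ∀ q ∈ c n true, ¬ Compat P p q)

/-- `p` directly forces `c(n) = i`. -/
def DFVal (c : ℕ → Bool → Set (Tr × Tr)) (p : Tr × Tr) (n : ℕ) (i : Bool) : Prop :=
  ∃ q ∈ c n i, pleq p q

/-- `p` directly forces `s ⊂ c`. -/
def DFPrefix (c : ℕ → Bool → Set (Tr × Tr)) (p : Tr × Tr) (s : Str) : Prop :=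
  ∀ n < s.length, DFVal c p n (s.getD n false)

/-- `p` directly forces `c ∉ [U]`. -/
def DFAvoid (c : ℕ → Bool → Set (Tr × Tr)) (p : Tr × Tr) (U : Tr) : Prop :=
  ∃ s : Str, s ∉ U ∧ DFPrefix c p s

/-- `p` directly forces `c ≠ d`: there are incomparable strings `s, t` such that
`p` directly forces `s ⊂ c` and `t ⊂ d`. -/
def DFNe (c d : ℕ → Bool → Set (Tr × Tr)) (p : Tr × Tr) : Prop :=
  ∃ s t : Str, ¬ s <+: t ∧ ¬ t <+: s ∧ DFPrefix c p s ∧ DFPrefix d p t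

/-- The action `σ·c` of a string on a real name. -/
def actName (σ : Str) (c : ℕ → Bool → Set (Tr × Tr)) : ℕ → Bool → Set (Tr × Tr) :=
  fun n i => if σ.getD n false = true then c n (!i) else c n i

/-- The name `π_left` of the left generic real. -/
def piLeft : ℕ → Bool → Set (Tr × Tr) := fun n i =>
  {p | ∃ s t : Str, s.length = n+1 ∧ t.length = n+1 ∧ s.getD n false = i ∧ p = (Tbr s, Tbr t)}

/-- The name `π_right` of the right generic real. -/
def piRight : ℕ → Bool → Set (Tr × Tr) := fun n i =>
  {p | ∃ s t : Str, s.length = n+1 ∧ t.length = n+1 ∧ t.getD n false = i ∧ p = (Tbr s, Tbr t)}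


section Aux

theorem length_act (s t : Str) : (act s t).length = t.length := by simp [act]

theorem getElem_act (s t : Str) (k : ℕ) (h : k < (act s t).length) :
    (act s t)[k] = Bool.xor (s.getD k false) (t[k]'(by simpa [length_act] using h)) := by
  simp [act]

theorem act_act (s t : Str) : act s (act s t) = t := by
  apply List.ext_getElem (by simp [length_act])
  intro k h1 h2
  rw [getElem_act, getElem_act]
  cases hx : s.getD k false <;> simp [hx]

theorem act_act_self (u v : Str) (h : u.length = v.length) : act (act u v) u = v := by
  apply List.ext_getElem (by simp [length_act, h])
  intro k h1 h2
  rw [getElem_act]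
  have hk : k < (act u v).length := by simpa [length_act] using h2
  rw [List.getD_eq_getElem _ _ hk, getElem_act]
  have hku : k < u.length := by simp [length_act] at hk; omega
  rw [List.getD_eq_getElem _ _ hku]
  cases hx : u[k] <;> cases hy : v[k] <;> simp [hx, hy]

theorem act_act_self' (u v : Str) (h : u.length = v.length) : act (act u v) v = u := by
  apply List.ext_getElem (by simp [length_act, h])
  intro k h1 h2
  have hk : k < (act u v).length := by simp [length_act]; omega
  rw [getElem_act, List.getD_eq_getElem _ _ hk, getElem_act]
  have hku : k < u.length := h2
  rw [List.getD_eq_getElem _ _ hku]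
  cases hx : u[k] <;> cases hy : v[k] <;> simp [hx, hy]

theorem act_append (s u v : Str) (h : s.length ≤ u.length) :
    act s (u ++ v) = act s u ++ v := by
  apply List.ext_getElem (by simp [length_act])
  intro k h1 h2
  rw [getElem_act]
  rcases lt_or_ge k u.length with hk | hk
  · rw [List.getElem_append_left hk,
      List.getElem_append_left (by simpa [length_act] using hk), getElem_act]
  · rw [List.getElem_append_right hk,
      List.getElem_append_right (by simpa [length_act] using hk)]
    have hd : s.getD k false = false := List.getD_eq_default _ _ (le_trans h hk)
    rw [hd]
    simp [length_act]

theorem act_take (s b : Str) (m : ℕ) : act s (b.take m) = (act s b).take m := by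
  apply List.ext_getElem (by simp [length_act])
  intro k h1 h2
  have hkb : k < b.length := by
    have := h2; simp [length_act] at this ⊢; omega
  rw [getElem_act, List.getElem_take, List.getElem_take, getElem_act]

theorem act_prefix {a b : Str} (s : Str) (h : a <+: b) : act s a <+: act s b := by
  rw [List.prefix_iff_eq_take] at h ⊢
  rw [length_act]
  conv_lhs => rw [h]
  exact act_take s b a.length


def qs (q : ℕ → Bool → Str) : ℕ → Bool → Str := fun k => q (k+1)

def blockstr (q : ℕ → Bool → Str) (n : ℕ) (f : ℕ → Bool) : Str :=
  ((List.range (n+1)).map (fun k => q k (f k))).flatten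

def mk (r : Str) (q : ℕ → Bool → Str) : Tr := {t | ∃ n f, t <+: r ++ blockstr q n f}

def Good (q : ℕ → Bool → Str) : Prop :=
  (∀ n, (q n true).length = (q n false).length ∧ 1 ≤ (q n false).length) ∧
  (∀ n i, (q n i).head? = some i)

theorem Good.len {q} (hq : Good q) (n : ℕ) (i : Bool) : (q n i).length = (q n false).length := by
  cases i
  · rfl
  · exact (hq.1 n).1

theorem Good.pos {q} (hq : Good q) (n : ℕ) (i : Bool) : 1 ≤ (q n i).length := by
  rw [hq.len n i]; exact (hq.1 n).2

theorem Good.qs {q} (hq : Good q) : Good (qs q) :=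
  ⟨fun n => hq.1 (n+1), fun n => hq.2 (n+1)⟩

theorem Good.cons_eq {q} (hq : Good q) (n : ℕ) (i : Bool) :
    q n i = i :: (q n i).tail := by
  have h := hq.2 n i
  cases hqi : q n i with
  | nil => rw [hqi] at h; simp at h
  | cons a l => rw [hqi] at h; simp at h; simp [h]

theorem blockstr_zero (q : ℕ → Bool → Str) (f : ℕ → Bool) :
    blockstr q 0 f = q 0 (f 0) := by simp [blockstr, List.range_succ]

theorem blockstr_succ (q : ℕ → Bool → Str) (n : ℕ) (f : ℕ → Bool) :
    blockstr q (n+1) f = q 0 (f 0) ++ blockstr (qs q) n (fun k => f (k+1)) := by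
  simp only [blockstr, List.range_succ_eq_map, List.map_cons, List.flatten_cons, List.map_map]
  rfl

theorem mem_mk_of_prefix {t r : Str} {q} (h : t <+: r) : t ∈ mk r q :=
  ⟨0, fun _ => false, h.trans (List.prefix_append _ _)⟩

theorem self_mem_mk (r : Str) (q) : r ∈ mk r q := mem_mk_of_prefix List.prefix_rfl

theorem comparable_of_mem_mk {t r : Str} {q} (h : t ∈ mk r q) : t <+: r ∨ r <+: t := by
  obtain ⟨n, f, h⟩ := h
  exact List.prefix_or_prefix_of_prefix h (List.prefix_append _ _)

theorem mem_mk_iff {t r : Str} {q} :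
    t ∈ mk r q ↔ t <+: r ∨ ∃ i, t ∈ mk (r ++ q 0 i) (qs q) := by
  constructor
  · rintro ⟨n, f, h⟩
    cases n with
    | zero =>
      rw [blockstr_zero] at h
      exact Or.inr ⟨f 0, 0, fun _ => false, h.trans (List.prefix_append _ _)⟩
    | succ m =>
      rw [blockstr_succ, ← List.append_assoc] at h
      exact Or.inr ⟨f 0, m, fun k => f (k+1), h⟩
  · rintro (h | ⟨i, n, f, h⟩)
    · exact mem_mk_of_prefix h
    · refine ⟨n+1, fun k => if k = 0 then i else f (k-1), ?_⟩
      rw [blockstr_succ]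
      simp only [if_pos rfl]
      have : (fun k => if k + 1 = 0 then i else f (k+1-1)) = f := by
        funext k; simp
      rw [this, ← List.append_assoc]
      exact h

theorem mk_side_subset {r : Str} {q} (i : Bool) : mk (r ++ q 0 i) (qs q) ⊆ mk r q :=
  fun _ h => mem_mk_iff.2 (Or.inr ⟨i, h⟩)

theorem getD_of_mem_side {t r : Str} {q} (hq : Good q) {i : Bool}
    (h : t ∈ mk (r ++ q 0 i) (qs q)) (hl : r.length < t.length) :
    t.getD r.length false = i := by
  have hc := comparable_of_mem_mk h
  have hlen : r.length < (r ++ q 0 i).length := by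
    simp [List.length_append]
    have := hq.pos 0 i; omega
  have hval : (r ++ q 0 i).getD r.length false = i := by
    rw [List.getD_append_right _ _ _ _ (le_refl _), Nat.sub_self]
    conv_lhs => rw [hq.cons_eq 0 i]
    rfl
  rcases hc with hc | hc
  · rw [List.getD_eq_getElem _ _ hl, hc.getElem hl, ← List.getD_eq_getElem _ _ hlen]
    exact hval
  · have he := hc.getElem hlen
    rw [List.getD_eq_getElem _ _ hl, ← he, ← List.getD_eq_getElem _ _ hlen]
    exact hval


theorem prefix_shorten {t u v : Str} (h : t <+: u ++ v) (hl : t.length ≤ u.length) :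
    t <+: u := by
  rw [List.prefix_iff_eq_take] at h ⊢
  rw [h, List.take_append_of_le_length hl]
  simp [List.take_take]

theorem restr_mono {S T : Tr} (h : S ⊆ T) (u : Str) : restr S u ⊆ restr T u :=
  fun t ht => ⟨h ht.1, ht.2⟩

theorem restr_subset (T : Tr) (u : Str) : restr T u ⊆ T := fun _ ht => ht.1

theorem restr_stem_self {r : Str} {q} : restr (mk r q) r = mk r q := by
  apply Set.eq_of_subset_of_subset (restr_subset _ _)
  exact fun t ht => ⟨ht, (comparable_of_mem_mk ht).symm⟩

theorem length_le_of_restr_eq {r : Str} {q} (hq : Good q) {t : Str}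
    (ht : t ∈ mk r q) (hres : restr (mk r q) t = mk r q) : t.length ≤ r.length := by
  by_contra hlt
  push_neg at hlt
  rcases mem_mk_iff.1 ht with hpre | ⟨j, hside⟩
  · exact absurd hpre.length_le (by omega)
  have hj : t.getD r.length false = j := getD_of_mem_side hq hside hlt
  have hwmem : (r ++ q 0 (!j)) ∈ mk r q := mk_side_subset (!j) (self_mem_mk _ _)
  have hwlen : r.length < (r ++ q 0 (!j)).length := by
    have := hq.pos 0 (!j); simp [List.length_append]; omega
  have hwj : (r ++ q 0 (!j)).getD r.length false = !j :=
    getD_of_mem_side hq (self_mem_mk _ _) hwlen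
  have hcomp : t <+: (r ++ q 0 (!j)) ∨ (r ++ q 0 (!j)) <+: t := by
    have hmem2 : (r ++ q 0 (!j)) ∈ restr (mk r q) t := by rw [hres]; exact hwmem
    exact hmem2.2
  have heq : t.getD r.length false = (r ++ q 0 (!j)).getD r.length false := by
    rcases hcomp with hc | hc
    · rw [List.getD_eq_getElem _ _ hlt, hc.getElem hlt, ← List.getD_eq_getElem _ _ hwlen]
    · rw [List.getD_eq_getElem _ _ hwlen, hc.getElem hwlen, ← List.getD_eq_getElem _ _ hlt]
  rw [hj, hwj] at heq
  simp at heq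

theorem stem_mk {r : Str} {q} (hq : Good q) : stem (mk r q) = r := by
  have hex : ∃ s, s ∈ mk r q ∧ restr (mk r q) s = mk r q ∧
      ∀ t ∈ mk r q, restr (mk r q) t = mk r q → t.length ≤ s.length :=
    ⟨r, self_mem_mk r q, restr_stem_self, fun t ht hres => length_le_of_restr_eq hq ht hres⟩
  have hs : stem (mk r q) ∈ mk r q ∧ restr (mk r q) (stem (mk r q)) = mk r q ∧
      ∀ t ∈ mk r q, restr (mk r q) t = mk r q → t.length ≤ (stem (mk r q)).length :=
    Classical.epsilon_spec hex
  obtain ⟨h1, h2, h3⟩ := hs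
  have hle := length_le_of_restr_eq hq h1 h2
  have hge := h3 r (self_mem_mk r q) restr_stem_self
  rcases comparable_of_mem_mk h1 with hc | hc
  · exact hc.eq_of_length (le_antisymm hle hge)
  · exact (hc.eq_of_length (le_antisymm hge hle)).symm

theorem restr_split {r : Str} {q} (hq : Good q) (i : Bool) :
    restr (mk r q) (r ++ [i]) = mk (r ++ q 0 i) (qs q) := by
  have hpre2 : r ++ [i] <+: r ++ q 0 i := by
    refine ⟨(q 0 i).tail, ?_⟩
    rw [List.append_assoc]
    congr 1
    exact (hq.cons_eq 0 i).symm
  apply Set.eq_of_subset_of_subset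
  · rintro t ⟨ht, hcomp⟩
    rcases mem_mk_iff.1 ht with hpre | ⟨j, hside⟩
    · exact mem_mk_of_prefix (hpre.trans (List.prefix_append _ _))
    · rcases le_or_gt t.length r.length with hl | hl
      · rcases comparable_of_mem_mk hside with hc | hc
        · exact mem_mk_of_prefix ((prefix_shorten hc hl).trans
            (List.prefix_append _ _))
        · exact absurd hc.length_le (by simp [List.length_append]; have := hq.pos 0 j; omega)
      · have hj : t.getD r.length false = j := getD_of_mem_side hq hside hl
        have hival : (r ++ [i]).getD r.length false = i := by
          rw [List.getD_append_right _ _ _ _ (le_refl _), Nat.sub_self]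
          rfl
        have hji : j = i := by
          rcases hcomp with hc | hc
          · have hlen2 : r.length < (r ++ [i]).length := by simp
            rw [← hj, ← hival, List.getD_eq_getElem _ _ hl, ← hc.getElem hlen2,
              ← List.getD_eq_getElem _ _ hlen2]
          · have : t.length ≤ r.length + 1 := by simpa using hc.length_le
            have hteq : t = r ++ [i] := hc.eq_of_length (by simp; omega)
            rw [← hj, ← hival, hteq]
        rw [hji] at hside
        exact hside
  · intro t ht
    refine ⟨mk_side_subset i ht, ?_⟩
    rcases comparable_of_mem_mk ht with hc | hc
    · exact (List.prefix_or_prefix_of_prefix hpre2 hc)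
    · exact Or.inl (hpre2.trans hc)

theorem split1_mk {r : Str} {q} (hq : Good q) (i : Bool) :
    split1 (mk r q) i = mk (r ++ q 0 i) (qs q) := by
  rw [split1, stem_mk hq, restr_split hq]

theorem splitS_nil (T : Tr) : splitS T [] = T := rfl

theorem splitS_cons (T : Tr) (i : Bool) (s : Str) :
    splitS T (i :: s) = splitS (split1 T i) s := rfl

theorem splN_shift {r : Str} {q} (hq : Good q) (i : Bool) :
    ∀ k, splN (r ++ q 0 i) (qs q) k = splN r q (k+1)
  | 0 => by simp [splN, List.length_append, hq.len 0 i]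
  | k+1 => by
    show splN (r ++ q 0 i) (qs q) k + (qs q k false).length = splN r q (k+1) + (q (k+1) false).length
    rw [splN_shift hq i k]
    rfl

theorem splN_length_congr {a b : Str} (h : a.length = b.length) (q : ℕ → Bool → Str) :
    ∀ k, splN a q k = splN b q k
  | 0 => h
  | k+1 => by
    show splN a q k + _ = splN b q k + _
    rw [splN_length_congr h q k]

theorem splN_congr : ∀ (k : ℕ) (r : Str) (q q' : ℕ → Bool → Str), Good q → Good q' →
    mk r q = mk r q' → splN r q k = splN r q' k
  | 0, _, _, _, _, _, _ => rfl
  | k+1, r, q, q', hq, hq', h => by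
    have e1 : mk (r ++ q 0 false) (qs q) = mk (r ++ q' 0 false) (qs q') := by
      rw [← split1_mk hq false, ← split1_mk hq' false, h]
    have e2 : r ++ q 0 false = r ++ q' 0 false := by
      have := stem_mk (r := r ++ q 0 false) hq.qs
      rw [e1, stem_mk hq'.qs] at this
      exact this.symm
    rw [← splN_shift hq false k, ← splN_shift hq' false k,
      show r ++ q 0 false = r ++ q' 0 false from e2]
    rw [e2] at e1
    exact splN_congr k (r ++ q' 0 false) (qs q) (qs q') hq.qs hq'.qs e1

theorem spl_mk {r : Str} {q} (hq : Good q) (k : ℕ) : spl (mk r q) k = splN r q k := by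
  have hex : ∃ rq : Str × (ℕ → Bool → Str), LTwit (mk r q) rq.1 rq.2 :=
    ⟨(r, q), hq.1, hq.2, rfl⟩
  have hw : LTwit (mk r q) (witness (mk r q)).1 (witness (mk r q)).2 :=
    Classical.epsilon_spec hex
  obtain ⟨h1, h2, h3⟩ := hw
  have hg : Good (witness (mk r q)).2 := ⟨h1, h2⟩
  have h3' : mk r q = mk (witness (mk r q)).1 (witness (mk r q)).2 := h3
  have hr : (witness (mk r q)).1 = r := by
    have := stem_mk (r := (witness (mk r q)).1) hg
    rw [← h3', stem_mk hq] at this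
    exact this.symm
  show splN (witness (mk r q)).1 (witness (mk r q)).2 k = splN r q k
  rw [hr] at h3' ⊢
  exact (splN_congr k r q (witness (mk r q)).2 hq hg h3').symm

theorem actT_mk {x r : Str} {q} (h : x.length ≤ r.length) :
    actT x (mk r q) = mk (act x r) q := by
  apply Set.eq_of_subset_of_subset
  · rintro _ ⟨u, ⟨n, f, hu⟩, rfl⟩
    refine ⟨n, f, ?_⟩
    have := act_prefix x hu
    rwa [act_append x r _ h] at this
  · rintro t ⟨n, f, ht⟩
    refine ⟨act x t, ⟨n, f, ?_⟩, act_act x t⟩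
    have := act_prefix x ht
    rwa [act_append x (act x r) _ (by rw [length_act]; exact h), act_act] at this

theorem actT_actT (x : Str) (S : Tr) : actT x (actT x S) = S := by
  unfold actT
  rw [Set.image_image]
  simp [act_act]

theorem actT_mono {S T : Tr} (x : Str) (h : S ⊆ T) : actT x S ⊆ actT x T :=
  Set.image_mono h

theorem splitS_act : ∀ (s : Str) (x r : Str) (q : ℕ → Bool → Str), Good q → x.length ≤ r.length →
    splitS (actT x (mk r q)) s = actT x (splitS (mk r q) s)
  | [], _, _, _, _, _ => rfl
  | i :: s, x, r, q, hq, h => by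
    have h2 : x.length ≤ (r ++ q 0 i).length := by rw [List.length_append]; omega
    rw [actT_mk h, splitS_cons, split1_mk hq, ← act_append x r (q 0 i) h, ← actT_mk h2,
      splitS_act s x (r ++ q 0 i) (qs q) hq.qs h2, splitS_cons, split1_mk hq]

theorem stem_prefix_of_subset {a b : Str} {p q} (hp : Good p) (hq : Good q)
    (h : mk a p ⊆ mk b q) : b <+: a := by
  have hmema : a ∈ mk b q := h (self_mem_mk a p)
  have hlenba : b.length ≤ a.length := by
    by_contra hlt
    push_neg at hlt
    have hu : (a ++ p 0 false) ∈ mk b q := h (mk_side_subset false (self_mem_mk _ _))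
    have hv : (a ++ p 0 true) ∈ mk b q := h (mk_side_subset true (self_mem_mk _ _))
    have hud : (a ++ p 0 false).getD a.length false = false := by
      rw [List.getD_append_right _ _ _ _ (le_refl _), Nat.sub_self]
      conv_lhs => rw [hp.cons_eq 0 false]
      rfl
    have hvd : (a ++ p 0 true).getD a.length false = true := by
      rw [List.getD_append_right _ _ _ _ (le_refl _), Nat.sub_self]
      conv_lhs => rw [hp.cons_eq 0 true]
      rfl
    have key : ∀ w, w ∈ mk b q → a.length < w.length →
        w.getD a.length false = b.getD a.length false := by
      intro w hw hwl
      rcases comparable_of_mem_mk hw with hc | hc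
      · rw [List.getD_eq_getElem _ _ hwl, hc.getElem hwl, ← List.getD_eq_getElem _ _ hlt]
      · rw [List.getD_eq_getElem _ _ hwl, ← hc.getElem hlt, ← List.getD_eq_getElem _ _ hlt]
    have h1 := key _ hu (by have := hp.pos 0 false; rw [List.length_append]; omega)
    have h2 := key _ hv (by have := hp.pos 0 true; rw [List.length_append]; omega)
    rw [hud] at h1
    rw [hvd] at h2
    rw [← h1] at h2
    simp at h2
  rcases comparable_of_mem_mk hmema with hc | hc
  · have : a = b := hc.eq_of_length (le_antisymm hc.length_le hlenba)
    rw [this]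
  · exact hc

theorem splitS_subN_subset : ∀ (s : Str) (a : Str) (p : ℕ → Bool → Str) (b : Str)
    (q : ℕ → Bool → Str), Good p → Good q →
    mk a p ⊆ mk b q → (∀ k < s.length, splN a p k = splN b q k) →
    splitS (mk a p) s ⊆ splitS (mk b q) s
  | [], _, _, _, _, _, _, h, _ => h
  | i :: s, a, p, b, q, hp, hq, hsub, hspl => by
    have hab : a = b := by
      have hpre := stem_prefix_of_subset hp hq hsub
      have hlen : splN a p 0 = splN b q 0 := hspl 0 (by simp)
      exact (hpre.eq_of_length hlen.symm).symm
    subst hab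
    rw [splitS_cons, splitS_cons, split1_mk hp, split1_mk hq]
    have hsub1 : mk (a ++ p 0 i) (qs p) ⊆ mk (a ++ q 0 i) (qs q) := by
      rw [← restr_split hp i, ← restr_split hq i]
      exact restr_mono hsub _
    refine splitS_subN_subset s _ (qs p) _ (qs q) hp.qs hq.qs hsub1 (fun k hk => ?_)
    rw [splN_shift hp i k, splN_shift hq i k]
    exact hspl (k+1) (by simp; omega)

def ext2 (c : Bool → Str) (q : ℕ → Bool → Str) : ℕ → Bool → Str :=
  fun k => Nat.casesOn k c q

end Aux

/-- Lemma `stf`(2c): if `P` is a large-tree forcing notion, `T` an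
`n`-collage over `P`, and `D ⊆ P` open dense in `P`, then there is an `n`-collage `Q`
over `P` with `Q ⊆_n T` and `Q→s ∈ D` for every `s ∈ 2^n`. -/
theorem stmt14 (P : Set Tr) (hP : IsLTF P) (n : ℕ) (T : Tr) (hT : IsCollage P n T)
    (D : Set Tr) (hD : OpenDense1 P D) :
    ∃ Q : Tr, IsCollage P n Q ∧ subN n Q T ∧
      ∀ s : Str, s.length = n → splitS Q s ∈ D := by
  induction n generalizing T with
  | zero =>
    have hTP : T ∈ P := hT.2 [] rfl
    obtain ⟨Q, hQD, hQsub⟩ := hD.2.1 T hTP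
    have hQP : Q ∈ P := hD.1 hQD
    refine ⟨Q, ⟨hP.1 Q hQP, ?_⟩, ⟨hQsub, fun k hk => absurd hk (Nat.not_lt_zero k)⟩, ?_⟩
    · intro s hs; rw [List.length_eq_zero_iff] at hs; subst hs; exact hQP
    · intro s hs; rw [List.length_eq_zero_iff] at hs; subst hs; exact hQD
  | succ n ih =>
    obtain ⟨r, q, h1, h2, h3⟩ := hT.1
    have hq : Good q := ⟨h1, h2⟩
    have hTmk : T = mk r q := h3
    subst hTmk
    set sf := r ++ q 0 false with hsf
    set st := r ++ q 0 true with hst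
    have hTf : IsCollage P n (mk sf (qs q)) := by
      refine ⟨⟨sf, qs q, hq.qs.1, hq.qs.2, rfl⟩, fun s hs => ?_⟩
      have hmem := hT.2 (false :: s) (by simp [hs])
      rwa [splitS_cons, split1_mk hq] at hmem
    obtain ⟨Q₀, hQ₀c, hQ₀sub, hQ₀D⟩ := ih (mk sf (qs q)) hTf
    obtain ⟨r₀, q₀, g1, g2, g3⟩ := hQ₀c.1
    have hq₀ : Good q₀ := ⟨g1, g2⟩
    have hQ₀mk : Q₀ = mk r₀ q₀ := g3
    subst hQ₀mk
    have hsfr₀ : sf <+: r₀ := stem_prefix_of_subset hq₀ hq.qs hQ₀sub.1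
    have hlen_st_sf : st.length = sf.length := by
      simp [hsf, hst, List.length_append, hq.len 0 true]
    set x := act sf st with hx
    have hxlen : x.length = sf.length := by rw [hx, length_act, hlen_st_sf]
    have hxsf : act x sf = st := act_act_self sf st hlen_st_sf.symm
    have hxst : act x st = sf := act_act_self' sf st hlen_st_sf.symm
    have hxr₀ : x.length ≤ r₀.length := by rw [hxlen]; exact hsfr₀.length_le
    have hxTf : actT x (mk sf (qs q)) = mk st (qs q) := by
      rw [actT_mk (le_of_eq hxlen), hxsf]
    have hxQ₀ : actT x (mk r₀ q₀) = mk (act x r₀) q₀ := actT_mk hxr₀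
    have hxQ₀c : IsCollage P n (mk (act x r₀) q₀) := by
      refine ⟨⟨_, q₀, hq₀.1, hq₀.2, rfl⟩, fun s hs => ?_⟩
      rw [← hxQ₀, splitS_act s x r₀ q₀ hq₀ hxr₀]
      exact hP.2.2 _ (hQ₀c.2 s hs) x
    obtain ⟨Q₁, hQ₁c, hQ₁sub, hQ₁D⟩ := ih (mk (act x r₀) q₀) hxQ₀c
    obtain ⟨b, q₁, k1, k2, k3⟩ := hQ₁c.1
    have hq₁ : Good q₁ := ⟨k1, k2⟩
    have hQ₁mk : Q₁ = mk b q₁ := k3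
    subst hQ₁mk
    have hsubTt : mk b q₁ ⊆ mk st (qs q) := by
      intro t ht
      rw [← hxTf]
      exact actT_mono x hQ₀sub.1 (by rw [hxQ₀]; exact hQ₁sub.1 ht)
    have hstb : st <+: b := stem_prefix_of_subset hq₁ hq.qs hsubTt
    have hxb : x.length ≤ b.length := by
      rw [hxlen, ← hlen_st_sf]; exact hstb.length_le
    set a := act x b with ha
    have hab : a.length = b.length := length_act x b
    have hsfa : sf <+: a := by rw [← hxst]; exact act_prefix x hstb
    have hQ₀' : actT x (mk b q₁) = mk a q₁ := actT_mk hxb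
    have hQ₀'sub : mk a q₁ ⊆ mk r₀ q₀ := by
      rw [← hQ₀']
      intro t ht
      have step1 : t ∈ actT x (mk (act x r₀) q₀) := actT_mono x hQ₁sub.1 ht
      rw [← hxQ₀, actT_actT] at step1
      exact step1
    have hrsf : r <+: sf := List.prefix_append r _
    have hrst : r <+: st := List.prefix_append r _
    have hra : r <+: a := hrsf.trans hsfa
    have hrb : r <+: b := hrst.trans hstb
    have hsflen : r.length < sf.length := by
      have := hq.pos 0 false; rw [hsf, List.length_append]; omega
    have hstlen : r.length < st.length := by rw [hlen_st_sf]; exact hsflen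
    have hralen : r.length < a.length := lt_of_lt_of_le hsflen hsfa.length_le
    have hrblen : r.length < b.length := lt_of_lt_of_le hstlen hstb.length_le
    set c : Bool → Str := fun i => if i then b.drop r.length else a.drop r.length with hc
    set Qq := ext2 c q₁ with hQq
    have hca : r ++ c false = a := by
      show r ++ a.drop r.length = a
      obtain ⟨u, hu⟩ := hra
      rw [← hu, List.drop_left]
    have hcb : r ++ c true = b := by
      show r ++ b.drop r.length = b
      obtain ⟨u, hu⟩ := hrb
      rw [← hu, List.drop_left]
    have hsfd : sf.getD r.length false = false := by
      rw [hsf, List.getD_append_right _ _ _ _ (le_refl _), Nat.sub_self]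
      conv_lhs => rw [hq.cons_eq 0 false]
      rfl
    have hstd : st.getD r.length false = true := by
      rw [hst, List.getD_append_right _ _ _ _ (le_refl _), Nat.sub_self]
      conv_lhs => rw [hq.cons_eq 0 true]
      rfl
    have had : a.getD r.length false = false := by
      rw [List.getD_eq_getElem _ _ hralen, ← hsfa.getElem hsflen,
        ← List.getD_eq_getElem _ _ hsflen]
      exact hsfd
    have hbd : b.getD r.length false = true := by
      rw [List.getD_eq_getElem _ _ hrblen, ← hstb.getElem hstlen,
        ← List.getD_eq_getElem _ _ hstlen]
      exact hstd
    have hgoodQq : Good Qq := by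
      constructor
      · intro m
        cases m with
        | zero =>
          constructor
          · show (b.drop r.length).length = (a.drop r.length).length
            simp [hab]
          · show 1 ≤ (a.drop r.length).length
            simp; omega
        | succ m => exact hq₁.1 m
      · intro m i
        cases m with
        | zero =>
          cases i
          · show (a.drop r.length).head? = some false
            rw [List.head?_drop, List.getElem?_eq_getElem hralen,
              ← List.getD_eq_getElem a false hralen, had]
          · show (b.drop r.length).head? = some true
            rw [List.head?_drop, List.getElem?_eq_getElem hrblen,
              ← List.getD_eq_getElem b false hrblen, hbd]
        | succ m => exact hq₁.2 m i
    have hsplitQf : split1 (mk r Qq) false = mk a q₁ := by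
      rw [split1_mk hgoodQq false]
      show mk (r ++ c false) q₁ = mk a q₁
      rw [hca]
    have hsplitQt : split1 (mk r Qq) true = mk b q₁ := by
      rw [split1_mk hgoodQq true]
      show mk (r ++ c true) q₁ = mk b q₁
      rw [hcb]
    have hchain : ∀ k < n, splN a q₁ k = splN r₀ q₀ k := by
      intro k hk
      have c1 : splN a q₁ k = splN b q₁ k := splN_length_congr hab q₁ k
      have c2 : splN b q₁ k = splN (act x r₀) q₀ k := by
        have hh := hQ₁sub.2 k hk
        rwa [spl_mk hq₁, spl_mk hq₀] at hh
      have c3 : splN (act x r₀) q₀ k = splN r₀ q₀ k :=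
        splN_length_congr (length_act x r₀) q₀ k
      rw [c1, c2, c3]
    refine ⟨mk r Qq, ⟨⟨r, Qq, hgoodQq.1, hgoodQq.2, rfl⟩, ?_⟩, ⟨?_, ?_⟩, ?_⟩
    · intro s hs
      cases s with
      | nil => simp at hs
      | cons i s' =>
        have hs' : s'.length = n := by simpa using hs
        rw [splitS_cons]
        cases i
        · rw [hsplitQf]
          have heq : splitS (mk a q₁) s' = actT x (splitS (mk b q₁) s') := by
            rw [← hQ₀', splitS_act s' x b q₁ hq₁ hxb]
          rw [heq]
          exact hP.2.2 _ (hQ₁c.2 s' hs') x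
        · rw [hsplitQt]
          exact hQ₁c.2 s' hs'
    · intro t ht
      rcases mem_mk_iff.1 ht with hpre | ⟨i, hside⟩
      · exact mem_mk_of_prefix hpre
      · cases i
        · have ht2 : t ∈ mk (r ++ c false) q₁ := hside
          rw [hca] at ht2
          exact mk_side_subset false (hQ₀sub.1 (hQ₀'sub ht2))
        · have ht2 : t ∈ mk (r ++ c true) q₁ := hside
          rw [hcb] at ht2
          exact mk_side_subset true (hsubTt ht2)
    · intro k hk
      rw [spl_mk hgoodQq, spl_mk hq]
      cases k with
      | zero => rfl
      | succ m =>
        have hm : m < n := by omega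
        rw [← splN_shift hgoodQq false m, ← splN_shift hq false m]
        have e1 : splN (r ++ Qq 0 false) (qs Qq) m = splN a q₁ m := by
          show splN (r ++ c false) q₁ m = splN a q₁ m
          rw [hca]
        rw [e1]
        have c4 : splN r₀ q₀ m = splN sf (qs q) m := by
          have hh := hQ₀sub.2 m hm
          rwa [spl_mk hq₀, spl_mk hq.qs] at hh
        rw [hchain m hm, c4, hsf]
    · intro s hs
      cases s with
      | nil => simp at hs
      | cons i s' =>
        have hs' : s'.length = n := by simpa using hs
        rw [splitS_cons]
        cases i
        · rw [hsplitQf]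
          have hmemP : splitS (mk a q₁) s' ∈ P := by
            have heq : splitS (mk a q₁) s' = actT x (splitS (mk b q₁) s') := by
              rw [← hQ₀', splitS_act s' x b q₁ hq₁ hxb]
            rw [heq]
            exact hP.2.2 _ (hQ₁c.2 s' hs') x
          have hmemD : splitS (mk r₀ q₀) s' ∈ D := hQ₀D s' hs'
          have hsubset : splitS (mk a q₁) s' ⊆ splitS (mk r₀ q₀) s' := by
            refine splitS_subN_subset s' a q₁ r₀ q₀ hq₁ hq₀ hQ₀'sub (fun k hk => ?_)
            exact hchain k (by rw [hs'] at hk; exact hk)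
          exact hD.2.2 _ hmemP _ hmemD hsubset
        · rw [hsplitQt]
          exact hQ₁D s' hs'


end E0L
end

section
/- Let P be a large-tree forcing notion, S ∈ P, ⟨R,R'⟩ ∈ P×_{E0}P, and let c be a P×_{E0}P-real name. Then there exist a tree S' ∈ P with S' ⊆ S and a condition ⟨T,T'⟩ ∈ P×_{E0}P with ⟨T,T'⟩ ≤ ⟨R,R'⟩ such that ⟨T,T'⟩ directly forces c ∉ [S']. -/
namespace E0L

theorem pleq_trans {p q r : Tr × Tr} (h1 : pleq p q) (h2 : pleq q r) : pleq p r :=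
  ⟨h1.1.trans h2.1, h1.2.trans h2.2⟩

theorem DFVal_mono {c : ℕ → Bool → Set (Tr × Tr)} {p q : Tr × Tr} {n : ℕ} {i : Bool}
    (h : DFVal c q n i) (hle : pleq p q) : DFVal c p n i := by
  obtain ⟨w, hw, hleq⟩ := h
  exact ⟨w, hw, pleq_trans hle hleq⟩

theorem extend_force (P : Set Tr) (c : ℕ → Bool → Set (Tr × Tr)) (hc : IsRealName P c)
    (n : ℕ) : ∀ p : Tr × Tr, CondPair P p → ∃ p' : Tr × Tr, CondPair P p' ∧ pleq p' p ∧
      ∃ s : Str, s.length = n ∧ DFPrefix c p' s := by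
  induction n with
  | zero =>
    intro p hp
    exact ⟨p, hp, ⟨subset_rfl, subset_rfl⟩, [], rfl, fun k hk => absurd hk (by simp)⟩
  | succ n ih =>
    intro p hp
    obtain ⟨p', hp', hle, s, hslen, hpref⟩ := ih p hp
    obtain ⟨q, hq, r, hr, hrp', hrq⟩ := hc.2.1 n p' hp'
    have hqi : ∃ i : Bool, q ∈ c n i := by
      rcases hq with h | h
      · exact ⟨false, h⟩
      · exact ⟨true, h⟩
    obtain ⟨i, hqi⟩ := hqi
    refine ⟨r, hr, pleq_trans hrp' hle, s ++ [i], by simp [hslen], ?_⟩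
    intro k hk
    have hk' : k < n + 1 := by simpa [hslen] using hk
    rcases Nat.lt_or_ge k n with h | h
    · have : (s ++ [i]).getD k false = s.getD k false :=
        List.getD_append _ _ _ _ (by omega)
      rw [this]
      exact DFVal_mono (hpref k (by omega)) hrp'
    · have hkn : k = n := by omega
      subst hkn
      have : (s ++ [i]).getD k false = i := by
        rw [List.getD_append_right _ _ _ _ (by omega)]
        simp [hslen]
      rw [this]
      exact ⟨q, hqi, hrq⟩

/-- Lemma `K1`: if `P` is a large-tree forcing notion, `S ∈ P`,
`⟨R,R'⟩ ∈ P ×_{E0} P`, and `c` is a `P ×_{E0} P`-real name, then there are `S' ∈ P`,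
`S' ⊆ S`, and `⟨T,T'⟩ ∈ P ×_{E0} P`, `⟨T,T'⟩ ≤ ⟨R,R'⟩`, such that `⟨T,T'⟩` directly
forces `c ∉ [S']`. -/
theorem stmt18 (P : Set Tr) (hP : IsLTF P) (S : Tr) (hS : S ∈ P)
    (R R' : Tr) (hRR' : CondPair P (R, R'))
    (c : ℕ → Bool → Set (Tr × Tr)) (hc : IsRealName P c) :
    ∃ S' ∈ P, S' ⊆ S ∧ ∃ T T' : Tr, CondPair P (T, T') ∧
      pleq (T, T') (R, R') ∧ DFAvoid c (T, T') S' := by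
  obtain ⟨r, q, hq1, hq2, hq3⟩ := hP.1 S hS
  set m := r.length with hm
  obtain ⟨p', hp', hle, s, hslen, hpref⟩ := extend_force P c hc (m + 1) (R, R') hRR'
  set i := s.getD m false with hi
  set u : Str := r ++ [!i] with hu
  -- u ∈ S
  have hqcons : ∃ t : Str, q 0 (!i) = (!i) :: t := by
    cases hql : q 0 (!i) with
    | nil => exact absurd (hql ▸ hq2 0 (!i)) (by simp)
    | cons a t =>
      have := hq2 0 (!i)
      rw [hql] at this
      simp at this
      exact ⟨t, by rw [this]⟩
  obtain ⟨t, ht⟩ := hqcons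
  have huS : u ∈ S := by
    rw [hq3]
    refine ⟨0, fun _ => !i, ?_⟩
    simp only [List.range_succ, List.range_zero]
    simp only [List.nil_append, List.map_cons, List.map_nil, List.flatten_cons,
      List.flatten_nil, List.append_nil]
    rw [ht, hu]
    exact ⟨t, by simp⟩
  have hS' : restr S u ∈ P := hP.2.1 S hS u huS
  have hulen : u.length = m + 1 := by simp [hu, hm]
  have hune : u ≠ s := by
    intro h
    have h2 : u.getD m false = s.getD m false := by rw [h]
    rw [hu, List.getD_append_right _ _ _ _ (le_of_eq hm), hm, Nat.sub_self] at h2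
    have h3 : (!i) = i := h2.trans hi.symm
    simp at h3
  refine ⟨restr S u, hS', fun x hx => hx.1, p'.1, p'.2, hp', hle, s, ?_, hpref⟩
  intro hsS'
  rcases hsS'.2 with h | h
  · exact hune (h.eq_of_length (by omega))
  · exact hune (h.eq_of_length (by omega)).symm

end E0L
end
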